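/- Consider the iteration θ_{t+1} = θ_t − λ∇_θ F(q_t; θ_t), where q_t = h(θ_t) for an implicit best-response map h: Θ → Q_α. Assume: (i) h is β_h-Lipschitz (w.r.t. the L¹ metric on Q_α), (ii) q ↦ ∇_θ F(q; θ_*) is β_q-Lipschitz, (iii) the first-order Taylor approximation ∇_θF(q_t;θ_t) = ∇_θF(q_t;θ_*) + ∇²_{θθ}F(q_t;θ_*)(θ_t − θ_*) holds, (iv) ∇_θ F(q_*; θ_*) = 0 at the limit point (q_*, θ_*), and (v) ‖∇²_{θθ}F(q_t;θ_*) − ∇²_{θθ}F(q_*;θ_*)‖ → 0. If ‖I − λ∇²_{θθ}F(q_*,θ_*)‖₂ < 1 − λβ_qβ_h, then limsup_{t→∞} ‖θ_{t+1} − θ_*‖₂ / ‖θ_t − θ_*‖₂ ≤ ‖I − λ∇²_{θθ}F(q_*,θ_*)‖₂ + λβ_qβ_h < 1, so the iteration converges linearly with rate ‖I − λ∇²_{θθ}F(q_*,θ_*)‖₂ + λβ_qβ_h. -/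
import Mathlib


open Filter

/-- Convergence rate for the follower player: under the Taylor expansion,
Lipschitz best-response and contraction assumptions, the iteration converges
linearly with rate `‖I - λ∇²F(q_*,θ_*)‖ + λ β_q β_h`. -/
theorem stmt5 {E : Type*} [NormedAddCommGroup E] [NormedSpace ℝ E]
    {Q : Type*} [MetricSpace Q]
    (G : Q → E → E) (H : Q → E →L[ℝ] E) (h : E → Q)
    (θ : ℕ → E) (θs : E) (lam βq βh : ℝ)
    (hlam : 0 < lam) (hβq : 0 ≤ βq) (hβh : 0 ≤ βh)
    (hiter : ∀ t, θ (t+1) = θ t - lam • G (h (θ t)) (θ t))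
    (hLiph : ∀ θ₁ θ₂ : E, dist (h θ₁) (h θ₂) ≤ βh * ‖θ₁ - θ₂‖)
    (hLipG : ∀ q₁ q₂ : Q, ‖G q₁ θs - G q₂ θs‖ ≤ βq * dist q₁ q₂)
    (hTaylor : ∀ t, G (h (θ t)) (θ t) = G (h (θ t)) θs + H (h (θ t)) (θ t - θs))
    (hstat : G (h θs) θs = 0)
    (hHconv : Tendsto (fun t => ‖H (h (θ t)) - H (h θs)‖) atTop (nhds 0))
    (hcontr : ‖ContinuousLinearMap.id ℝ E - lam • H (h θs)‖ < 1 - lam * βq * βh) :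
    limsup (fun t => ‖θ (t+1) - θs‖ / ‖θ t - θs‖) atTop ≤
      ‖ContinuousLinearMap.id ℝ E - lam • H (h θs)‖ + lam * βq * βh ∧
    ‖ContinuousLinearMap.id ℝ E - lam • H (h θs)‖ + lam * βq * βh < 1 := by
  set r : ℝ := ‖ContinuousLinearMap.id ℝ E - lam • H (h θs)‖ with hr
  refine ⟨?_, by linarith⟩
  -- pointwise key inequality
  have key : ∀ t, ‖θ (t+1) - θs‖ ≤
      (r + lam * ‖H (h (θ t)) - H (h θs)‖ + lam * βq * βh) * ‖θ t - θs‖ := by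
    intro t
    have hdecomp : θ (t+1) - θs =
        (ContinuousLinearMap.id ℝ E - lam • H (h θs)) (θ t - θs)
        - lam • ((H (h (θ t)) - H (h θs)) (θ t - θs))
        - lam • (G (h (θ t)) θs - G (h θs) θs) := by
      rw [hiter, hTaylor, hstat]
      simp only [ContinuousLinearMap.sub_apply, ContinuousLinearMap.coe_smul',
        Pi.smul_apply, ContinuousLinearMap.id_apply, smul_add, smul_sub, sub_zero]
      abel
    rw [hdecomp]
    have hA : ‖(ContinuousLinearMap.id ℝ E - lam • H (h θs)) (θ t - θs)‖
        ≤ r * ‖θ t - θs‖ := (ContinuousLinearMap.id ℝ E - lam • H (h θs)).le_opNorm _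
    have hB : ‖(H (h (θ t)) - H (h θs)) (θ t - θs)‖
        ≤ ‖H (h (θ t)) - H (h θs)‖ * ‖θ t - θs‖ :=
      (H (h (θ t)) - H (h θs)).le_opNorm _
    have hC : ‖G (h (θ t)) θs - G (h θs) θs‖ ≤ βq * (βh * ‖θ t - θs‖) :=
      (hLipG _ _).trans (by
        have := hLiph (θ t) θs
        nlinarith [dist_nonneg (x := h (θ t)) (y := h θs)])
    calc ‖(ContinuousLinearMap.id ℝ E - lam • H (h θs)) (θ t - θs)
        - lam • ((H (h (θ t)) - H (h θs)) (θ t - θs))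
        - lam • (G (h (θ t)) θs - G (h θs) θs)‖
        ≤ ‖(ContinuousLinearMap.id ℝ E - lam • H (h θs)) (θ t - θs)‖
          + ‖lam • ((H (h (θ t)) - H (h θs)) (θ t - θs))‖
          + ‖lam • (G (h (θ t)) θs - G (h θs) θs)‖ := by
          exact norm_sub_le_of_le (norm_sub_le _ _) le_rfl
      _ ≤ r * ‖θ t - θs‖ + lam * (‖H (h (θ t)) - H (h θs)‖ * ‖θ t - θs‖)
          + lam * (βq * (βh * ‖θ t - θs‖)) := by
          rw [norm_smul, norm_smul, Real.norm_eq_abs, abs_of_pos hlam]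
          gcongr
      _ = (r + lam * ‖H (h (θ t)) - H (h θs)‖ + lam * βq * βh) * ‖θ t - θs‖ := by
          ring
  have hr0 : 0 ≤ r := norm_nonneg _
  -- ratio bound
  have hratio : ∀ t, ‖θ (t+1) - θs‖ / ‖θ t - θs‖ ≤
      r + lam * ‖H (h (θ t)) - H (h θs)‖ + lam * βq * βh := by
    intro t
    rcases eq_or_lt_of_le (norm_nonneg (θ t - θs)) with h0 | h0
    · have : ‖θ (t+1) - θs‖ = 0 := le_antisymm (by simpa [← h0] using key t) (norm_nonneg _)
      rw [this, zero_div]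
      positivity
    · rw [div_le_iff₀ h0]
      exact key t
  have hg : Tendsto (fun t => r + lam * ‖H (h (θ t)) - H (h θs)‖ + lam * βq * βh)
      atTop (nhds (r + lam * βq * βh)) := by
    have := (hHconv.const_mul lam).const_add r
    have h2 := this.add_const (lam * βq * βh)
    simpa using h2
  calc limsup (fun t => ‖θ (t+1) - θs‖ / ‖θ t - θs‖) atTop
      ≤ limsup (fun t => r + lam * ‖H (h (θ t)) - H (h θs)‖ + lam * βq * βh) atTop :=
        limsup_le_limsup (Eventually.of_forall hratio)
          (isCoboundedUnder_le_of_le atTop (fun t => div_nonneg (norm_nonneg _) (norm_nonneg _)))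
          hg.isBoundedUnder_le
    _ = r + lam * βq * βh := hg.limsup_eq
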